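/- Let B be a unital ℂ-algebra and φ : B → ℂ a unital linear functional (φ(1) = 1). Then the tensor algebra T(ker φ) of the subspace ker φ is isomorphic, as a unital ℂ-algebra, to the quotient of the tensor algebra T(B) by the two-sided ideal generated by ι(1_B) − 1, where ι : B → T(B) is the canonical linear inclusion. In particular, up to isomorphism the algebra T(ker φ) does not depend on the choice of the unital linear functional φ. -/
import Mathlib

open TensorAlgebra

noncomputable section

variable {B : Type*} [Ring B] [Algebra ℂ B]

/-- The relation cutting out the ideal generated by `ι 1 - 1`. -/
abbrev myRel (B : Type*) [Ring B] [Algebra ℂ B] : TensorAlgebra ℂ B → TensorAlgebra ℂ B → Prop :=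
  fun a b => a = TensorAlgebra.ι ℂ (1 : B) - 1 ∧ b = 0

/-- Linear projection onto `ker φ` along `ℂ·1`. -/
def myProj (φ : B →ₗ[ℂ] ℂ) (hφ : φ 1 = 1) : B →ₗ[ℂ] LinearMap.ker φ where
  toFun b := ⟨b - φ b • 1, by simp [LinearMap.mem_ker, hφ, smul_eq_mul]⟩
  map_add' a b := by ext; simp [add_smul]; abel
  map_smul' c b := by ext; simp [smul_sub, smul_smul]

def myF (φ : B →ₗ[ℂ] ℂ) (hφ : φ 1 = 1) :
    TensorAlgebra ℂ B →ₐ[ℂ] TensorAlgebra ℂ (LinearMap.ker φ) :=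
  TensorAlgebra.lift ℂ
    ((Algebra.linearMap ℂ (TensorAlgebra ℂ (LinearMap.ker φ))).comp φ +
      (TensorAlgebra.ι ℂ).comp (myProj φ hφ))

lemma myF_ι (φ : B →ₗ[ℂ] ℂ) (hφ : φ 1 = 1) (b : B) :
    myF φ hφ (TensorAlgebra.ι ℂ b) =
      algebraMap ℂ _ (φ b) + TensorAlgebra.ι ℂ (myProj φ hφ b) := by
  simp [myF]

lemma myF_rel (φ : B →ₗ[ℂ] ℂ) (hφ : φ 1 = 1) ⦃a b : TensorAlgebra ℂ B⦄
    (h : myRel B a b) : myF φ hφ a = myF φ hφ b := by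
  obtain ⟨ha, hb⟩ := h
  subst ha hb
  have h1 : myProj φ hφ (1 : B) = 0 := by ext; simp [myProj, hφ]
  simp [map_sub, myF_ι, hφ, h1]

def myDown (φ : B →ₗ[ℂ] ℂ) (hφ : φ 1 = 1) :
    RingQuot (myRel B) →ₐ[ℂ] TensorAlgebra ℂ (LinearMap.ker φ) :=
  RingQuot.liftAlgHom ℂ ⟨myF φ hφ, myF_rel φ hφ⟩

def myUp (φ : B →ₗ[ℂ] ℂ) :
    TensorAlgebra ℂ (LinearMap.ker φ) →ₐ[ℂ] RingQuot (myRel B) :=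
  TensorAlgebra.lift ℂ
    ((RingQuot.mkAlgHom ℂ (myRel B)).toLinearMap.comp
      ((TensorAlgebra.ι ℂ).comp (LinearMap.ker φ).subtype))

lemma mk_ι_one : RingQuot.mkAlgHom ℂ (myRel B) (TensorAlgebra.ι ℂ (1 : B)) = 1 := by
  have := RingQuot.mkAlgHom_rel ℂ
    (show myRel B (TensorAlgebra.ι ℂ (1 : B) - 1) 0 from ⟨rfl, rfl⟩)
  rw [map_sub, map_zero, sub_eq_zero] at this
  simpa using this

def myEquiv (φ : B →ₗ[ℂ] ℂ) (hφ : φ 1 = 1) :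
    TensorAlgebra ℂ (LinearMap.ker φ) ≃ₐ[ℂ] RingQuot (myRel B) := by
  refine AlgEquiv.ofAlgHom (myUp φ) (myDown φ hφ) ?_ ?_
  · apply RingQuot.ringQuot_ext'
    apply TensorAlgebra.hom_ext
    ext b
    have : myDown φ hφ (RingQuot.mkAlgHom ℂ (myRel B) (TensorAlgebra.ι ℂ b))
        = myF φ hφ (TensorAlgebra.ι ℂ b) := by
      simp [myDown, RingQuot.liftAlgHom_mkAlgHom_apply]
    simp only [AlgHom.comp_apply, LinearMap.comp_apply, AlgHom.toLinearMap_apply,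
      AlgHom.id_apply, AlgHom.coe_comp, Function.comp_apply]
    rw [this, myF_ι, map_add, AlgHom.commutes]
    have h3 : myUp φ (TensorAlgebra.ι ℂ (myProj φ hφ b)) =
        RingQuot.mkAlgHom ℂ (myRel B) (TensorAlgebra.ι ℂ ((myProj φ hφ b : B))) := by
      simp [myUp]
    rw [h3]
    show algebraMap ℂ _ (φ b) + RingQuot.mkAlgHom ℂ (myRel B) (TensorAlgebra.ι ℂ (b - φ b • 1)) = _
    rw [map_sub, map_smul, map_sub, map_smul, mk_ι_one, Algebra.algebraMap_eq_smul_one]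
    abel
  · apply TensorAlgebra.hom_ext
    ext x
    simp only [LinearMap.comp_apply, AlgHom.toLinearMap_apply, AlgHom.comp_apply,
      AlgHom.id_apply, LinearMap.id_apply]
    have h1 : myUp φ (TensorAlgebra.ι ℂ x)
        = RingQuot.mkAlgHom ℂ (myRel B) (TensorAlgebra.ι ℂ (x : B)) := by
      simp [myUp]
    rw [h1]
    have h2 : myDown φ hφ (RingQuot.mkAlgHom ℂ (myRel B) (TensorAlgebra.ι ℂ (x : B)))
        = myF φ hφ (TensorAlgebra.ι ℂ (x : B)) := by
      simp [myDown, RingQuot.liftAlgHom_mkAlgHom_apply]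
    rw [h2, myF_ι]
    have hx : φ (x : B) = 0 := x.2
    have hp : myProj φ hφ (x : B) = x := by ext; simp [myProj, hx]
    simp [hx, hp]

end

theorem statement0 {B : Type*} [Ring B] [Algebra ℂ B]
    (φ ψ : B →ₗ[ℂ] ℂ) (hφ : φ 1 = 1) (hψ : ψ 1 = 1) :
    Nonempty (TensorAlgebra ℂ (LinearMap.ker φ) ≃ₐ[ℂ]
        RingQuot (fun a b : TensorAlgebra ℂ B =>
          a = TensorAlgebra.ι ℂ (1 : B) - 1 ∧ b = 0)) ∧
    Nonempty (TensorAlgebra ℂ (LinearMap.ker φ) ≃ₐ[ℂ]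
        TensorAlgebra ℂ (LinearMap.ker ψ)) := by
  exact ⟨⟨myEquiv φ hφ⟩, ⟨(myEquiv φ hφ).trans (myEquiv ψ hψ).symm⟩⟩
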